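/- Let P(λ) = Σ_{i=0}^g P_i λ^i and Q(λ) = Σ_{i=0}^t Q_i λ^i be matrix polynomials such that P(λ)Q(λ) is defined. Then ‖P(λ)Q(λ)‖_F ≤ min{√(g+1), √(t+1)} · ‖P(λ)‖_F · ‖Q(λ)‖_F. -/

import Mathlib

open Polynomial
open Finset

/-- The Frobenius norm of a matrix polynomial:
`‖P(λ)‖_F = √(∑_i ‖P_i‖_F²)` (independent of the grade chosen). -/
noncomputable def polyFrobNorm {m n : Type*} [Fintype m] [Fintype n]
    (M : Matrix m n (Polynomial ℂ)) : ℝ :=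
  Real.sqrt (∑' i : ℕ, ∑ r, ∑ c, ‖(M r c).coeff i‖ ^ 2)

lemma polyFrobNorm_transpose {m n : Type*} [Fintype m] [Fintype n]
    (M : Matrix m n (Polynomial ℂ)) : polyFrobNorm M.transpose = polyFrobNorm M := by
  unfold polyFrobNorm
  congr 1
  exact tsum_congr fun i => Finset.sum_comm

lemma polyFrobNorm_eq_sum {m n : Type*} [Fintype m] [Fintype n] (d : ℕ)
    (M : Matrix m n (Polynomial ℂ)) (h : ∀ i j, (M i j).degree ≤ (d : ℕ)) :
    polyFrobNorm M = Real.sqrt (∑ i ∈ range (d+1), ∑ r, ∑ c, ‖(M r c).coeff i‖ ^ 2) := by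
  unfold polyFrobNorm
  congr 1
  apply tsum_eq_sum
  intro b hb
  simp only [mem_range, not_lt] at hb
  apply Finset.sum_eq_zero; intro r _
  apply Finset.sum_eq_zero; intro c _
  rw [Polynomial.coeff_eq_zero_of_degree_lt ((h r c).trans_lt (by exact_mod_cast hb))]
  simp

lemma coeff_mul_form (g : ℕ) (p q : Polynomial ℂ) (hp : p.degree ≤ (g : ℕ)) (k : ℕ) :
    (p * q).coeff k = ∑ i ∈ range (g+1), p.coeff i * (if i ≤ k then q.coeff (k-i) else 0) := by
  rw [Polynomial.coeff_mul, Finset.Nat.sum_antidiagonal_eq_sum_range_succ_mk]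
  have h1 : ∑ i ∈ range (k+1), p.coeff i * q.coeff (k-i)
      = ∑ i ∈ range (k+1), p.coeff i * (if i ≤ k then q.coeff (k-i) else 0) := by
    apply Finset.sum_congr rfl
    intro i hi
    rw [if_pos (Nat.lt_succ_iff.mp (mem_range.mp hi))]
  rw [Nat.succ_eq_add_one, h1]
  set M := max (g+1) (k+1) with hM
  have h2 : ∑ i ∈ range (k+1), p.coeff i * (if i ≤ k then q.coeff (k-i) else 0)
      = ∑ i ∈ range M, p.coeff i * (if i ≤ k then q.coeff (k-i) else 0) := by
    apply Finset.sum_subset (Finset.range_subset_range.mpr (le_max_right _ _))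
    intro i _ hi
    rw [if_neg (by simpa [Nat.lt_succ_iff] using (mem_range.not.mp hi)), mul_zero]
  have h3 : ∑ i ∈ range (g+1), p.coeff i * (if i ≤ k then q.coeff (k-i) else 0)
      = ∑ i ∈ range M, p.coeff i * (if i ≤ k then q.coeff (k-i) else 0) := by
    apply Finset.sum_subset (Finset.range_subset_range.mpr (le_max_left _ _))
    intro i _ hi
    have hgi : g < i := Nat.lt_of_succ_le (Nat.not_lt.mp (mem_range.not.mp hi))
    rw [Polynomial.coeff_eq_zero_of_degree_lt (hp.trans_lt (by exact_mod_cast hgi)), zero_mul]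
  rw [h2, h3]

lemma shift_sum (t : ℕ) (q : Polynomial ℂ) (hq : q.degree ≤ (t : ℕ)) (i K : ℕ)
    (hiK : i + (t+1) ≤ K) :
    ∑ k ∈ range K, (if i ≤ k then ‖q.coeff (k-i)‖^2 else 0)
      = ∑ l ∈ range (t+1), ‖q.coeff l‖^2 := by
  have hiK' : i ≤ K := le_trans (Nat.le_add_right _ _) hiK
  rw [range_eq_Ico, ← Finset.sum_Ico_consecutive _ (Nat.zero_le i) hiK']
  have h1 : ∑ k ∈ Ico 0 i, (if i ≤ k then ‖q.coeff (k-i)‖^2 else 0) = 0 := by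
    apply Finset.sum_eq_zero
    intro k hk
    rw [if_neg (Nat.not_le.mpr (mem_Ico.mp hk).2)]
  have h2 : ∑ k ∈ Ico i K, (if i ≤ k then ‖q.coeff (k-i)‖^2 else 0)
      = ∑ k ∈ Ico i K, ‖q.coeff (k-i)‖^2 := by
    apply Finset.sum_congr rfl
    intro k hk
    rw [if_pos (mem_Ico.mp hk).1]
  rw [h1, h2, zero_add, Finset.sum_Ico_eq_sum_range]
  simp only [Nat.add_sub_cancel_left]
  symm
  apply Finset.sum_subset (Finset.range_subset_range.mpr (by omega))
  intro l _ hl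
  have hlt : t < l := by simpa using Nat.not_lt.mp (mem_range.not.mp hl)
  rw [Polynomial.coeff_eq_zero_of_degree_lt (hq.trans_lt (by exact_mod_cast hlt))]
  simp

lemma sum_rot {α β : Type*} [Fintype α] [Fintype β] (s : Finset ℕ) (f : α → β → ℕ → ℝ) :
    ∑ a, ∑ b, ∑ l ∈ s, f a b l = ∑ l ∈ s, ∑ a, ∑ b, f a b l := by
  calc ∑ a, ∑ b, ∑ l ∈ s, f a b l = ∑ a, ∑ l ∈ s, ∑ b, f a b l :=
        Finset.sum_congr rfl fun a _ => Finset.sum_comm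
    _ = ∑ l ∈ s, ∑ a, ∑ b, f a b l := Finset.sum_comm

lemma key_bound {m n p : Type*} [Fintype m] [Fintype n] [Fintype p]
    (g t : ℕ) (P : Matrix m n (Polynomial ℂ)) (Q : Matrix n p (Polynomial ℂ))
    (hP : ∀ i j, (P i j).degree ≤ (g : ℕ)) (hQ : ∀ i j, (Q i j).degree ≤ (t : ℕ)) :
    polyFrobNorm (P * Q) ≤
      Real.sqrt ((g : ℝ) + 1) * polyFrobNorm P * polyFrobNorm Q := by
  classical
  have hPQ : ∀ r c, ((P * Q) r c).degree ≤ ((g + t : ℕ) : ℕ) := by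
    intro r c
    rw [Matrix.mul_apply]
    refine (Polynomial.degree_sum_le _ _).trans (Finset.sup_le fun j _ => ?_)
    refine (Polynomial.degree_mul_le _ _).trans ?_
    calc (P r j).degree + (Q j c).degree ≤ (g : WithBot ℕ) + (t : WithBot ℕ) :=
          add_le_add (hP r j) (hQ j c)
      _ = ((g + t : ℕ) : WithBot ℕ) := by push_cast; rfl
  rw [polyFrobNorm_eq_sum (g+t) _ hPQ, polyFrobNorm_eq_sum g P hP, polyFrobNorm_eq_sum t Q hQ]
  set K := g + t + 1 with hK
  set s : Finset (n × ℕ) := Finset.univ ×ˢ range (g+1) with hs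
  set SP := ∑ i ∈ range (g+1), ∑ r, ∑ c, ‖(P r c).coeff i‖^2 with hSP
  set SQ := ∑ i ∈ range (t+1), ∑ r, ∑ c, ‖(Q r c).coeff i‖^2 with hSQ
  have hSPnn : 0 ≤ SP := by positivity
  have hSQnn : 0 ≤ SQ := by positivity
  -- A and B
  set A : m → ℝ := fun r => ∑ x ∈ s, ‖(P r x.1).coeff x.2‖^2 with hA
  set B : p → ℕ → ℝ := fun c k =>
    ∑ x ∈ s, (if x.2 ≤ k then ‖(Q x.1 c).coeff (k - x.2)‖ else 0)^2 with hB
  have pointwise : ∀ (r : m) (c : p) (k : ℕ),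
      ‖((P * Q) r c).coeff k‖^2 ≤ A r * B c k := by
    intro r c k
    have hco : ((P * Q) r c).coeff k
        = ∑ x ∈ s, (P r x.1).coeff x.2 * (if x.2 ≤ k then (Q x.1 c).coeff (k - x.2) else 0) := by
      rw [Matrix.mul_apply, Polynomial.finset_sum_coeff, hs, Finset.sum_product]
      exact Finset.sum_congr rfl fun j _ => coeff_mul_form g _ _ (hP r j) k
    have step1 : ‖((P * Q) r c).coeff k‖
        ≤ ∑ x ∈ s, ‖(P r x.1).coeff x.2‖ * (if x.2 ≤ k then ‖(Q x.1 c).coeff (k - x.2)‖ else 0) := by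
      rw [hco]
      refine (norm_sum_le _ _).trans_eq (Finset.sum_congr rfl fun x _ => ?_)
      rw [norm_mul, apply_ite norm, norm_zero]
    calc ‖((P * Q) r c).coeff k‖^2
        ≤ (∑ x ∈ s, ‖(P r x.1).coeff x.2‖ * (if x.2 ≤ k then ‖(Q x.1 c).coeff (k - x.2)‖ else 0))^2 :=
          pow_le_pow_left₀ (norm_nonneg _) step1 2
      _ ≤ A r * B c k := Finset.sum_mul_sq_le_sq_mul_sq s _ _
  have sumB : ∀ c : p, ∑ k ∈ range K, B c k = ((g : ℝ) + 1) * ∑ j, ∑ l ∈ range (t+1), ‖(Q j c).coeff l‖^2 := by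
    intro c
    rw [Finset.sum_comm]
    have : ∀ x ∈ s, ∑ k ∈ range K, (if x.2 ≤ k then ‖(Q x.1 c).coeff (k - x.2)‖ else 0)^2
        = ∑ l ∈ range (t+1), ‖(Q x.1 c).coeff l‖^2 := by
      intro x hx
      have hx2 : x.2 < g + 1 := (Finset.mem_product.mp hx).2 |> mem_range.mp
      have : ∀ k, (if x.2 ≤ k then ‖(Q x.1 c).coeff (k - x.2)‖ else 0)^2
          = (if x.2 ≤ k then ‖(Q x.1 c).coeff (k - x.2)‖^2 else 0) := by
        intro k
        split <;> simp
      simp_rw [this]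
      exact shift_sum t _ (hQ x.1 c) x.2 K (by omega)
    rw [Finset.sum_congr rfl this, hs, Finset.sum_product]
    simp [Finset.mul_sum]
  have hArSP : ∑ r, A r = SP := by
    simp only [hA, hs, Finset.sum_product]
    exact sum_rot (range (g+1)) (fun r j i => ‖(P r j).coeff i‖^2)
  have hSumBSQ : ∑ c, ∑ k ∈ range K, B c k = ((g : ℝ) + 1) * SQ := by
    simp_rw [sumB]
    rw [← Finset.mul_sum]
    congr 1
    rw [sum_rot (range (t+1)) (fun c j l => ‖(Q j c).coeff l‖^2)]
    exact Finset.sum_congr rfl fun l _ => Finset.sum_comm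
  have main : (∑ k ∈ range K, ∑ r, ∑ c, ‖((P * Q) r c).coeff k‖^2)
      ≤ ((g : ℝ) + 1) * (SP * SQ) := by
    have h1 : (∑ k ∈ range K, ∑ r, ∑ c, ‖((P * Q) r c).coeff k‖^2)
        ≤ ∑ k ∈ range K, ∑ r, ∑ c, A r * B c k :=
      Finset.sum_le_sum fun k _ => Finset.sum_le_sum fun r _ =>
        Finset.sum_le_sum fun c _ => pointwise r c k
    have h2 : ∑ k ∈ range K, ∑ r, ∑ c, A r * B c k
        = (∑ r, A r) * (∑ c, ∑ k ∈ range K, B c k) := by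
      rw [← sum_rot (range K) (fun r c k => A r * B c k)]
      rw [Finset.sum_mul]
      simp_rw [Finset.mul_sum]
    exact h1.trans (le_of_eq (by rw [h2, hArSP, hSumBSQ]; ring))
  calc Real.sqrt (∑ k ∈ range (g+t+1), ∑ r, ∑ c, ‖((P * Q) r c).coeff k‖^2)
      ≤ Real.sqrt (((g : ℝ) + 1) * (SP * SQ)) := Real.sqrt_le_sqrt main
    _ = Real.sqrt ((g : ℝ) + 1) * Real.sqrt SP * Real.sqrt SQ := by
        rw [Real.sqrt_mul (by positivity), Real.sqrt_mul hSPnn, mul_assoc]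

/-- `‖P(λ)Q(λ)‖_F ≤ min{√(g+1), √(t+1)} · ‖P(λ)‖_F · ‖Q(λ)‖_F` for matrix polynomials
`P` of grade `g` and `Q` of grade `t`. -/
theorem polyFrobNorm_mul_le_min {m n p : Type*} [Fintype m] [Fintype n] [Fintype p]
    (g t : ℕ) (P : Matrix m n (Polynomial ℂ)) (Q : Matrix n p (Polynomial ℂ))
    (hP : ∀ i j, (P i j).degree ≤ (g : ℕ)) (hQ : ∀ i j, (Q i j).degree ≤ (t : ℕ)) :
    polyFrobNorm (P * Q) ≤
      min (Real.sqrt ((g : ℝ) + 1)) (Real.sqrt ((t : ℝ) + 1)) *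
        polyFrobNorm P * polyFrobNorm Q := by

  have h1 := key_bound g t P Q hP hQ
  have h2 : polyFrobNorm (P * Q) ≤
      Real.sqrt ((t : ℝ) + 1) * polyFrobNorm P * polyFrobNorm Q := by
    have h := key_bound t g Q.transpose P.transpose (fun i j => hQ j i) (fun i j => hP j i)
    rw [← Matrix.transpose_mul, polyFrobNorm_transpose, polyFrobNorm_transpose,
      polyFrobNorm_transpose] at h
    exact h.trans (le_of_eq (by ring))
  rcases le_total (Real.sqrt ((g : ℝ) + 1)) (Real.sqrt ((t : ℝ) + 1)) with h | h
  · rw [min_eq_left h]; exact h1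
  · rw [min_eq_right h]; exact h2
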